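/- Let J_t be defined recursively by J_t = M + T − T(J_{t−1} + T)⁻¹T with J_0 = M, where M, T are symmetric positive definite. Then the sequence (J_t) is monotone nondecreasing in the Loewner order, bounded above by M + T, and converges to the unique positive definite solution X of X = M + T − T(X + T)⁻¹T. -/

import Mathlib

open Matrix
section helpers
variable {n : ℕ}

lemma herm_transpose {P : Matrix (Fin n) (Fin n) ℝ} (hP : P.IsHermitian) : Pᵀ = P := by
  ext i j
  conv_rhs => rw [← hP.eq]
  simp [Matrix.conjTranspose_apply]

open scoped MatrixOrder in
lemma exists_herm_sqrt {C : Matrix (Fin n) (Fin n) ℝ} (hC : C.PosSemidef) :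
    ∃ S : Matrix (Fin n) (Fin n) ℝ, S.PosSemidef ∧ S * S = C :=
  ⟨CFC.sqrt C, (CFC.sqrt_nonneg C).posSemidef, CFC.sqrt_mul_sqrt_self C hC.nonneg⟩

lemma qf_conj (A : Matrix (Fin n) (Fin n) ℝ) {P : Matrix (Fin n) (Fin n) ℝ}
    (hP : P.IsHermitian) (x : Fin n → ℝ) :
    x ⬝ᵥ ((P * A * P) *ᵥ x) = (P *ᵥ x) ⬝ᵥ (A *ᵥ (P *ᵥ x)) := by
  rw [← Matrix.mulVec_mulVec, ← Matrix.mulVec_mulVec, Matrix.dotProduct_mulVec,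
    ← Matrix.mulVec_transpose, herm_transpose hP]

/-- Conjugation by a hermitian matrix preserves PSD. -/
lemma psd_conj {A P : Matrix (Fin n) (Fin n) ℝ} (hA : A.PosSemidef) (hP : P.IsHermitian) :
    (P * A * P).PosSemidef := by
  have := hA.conjTranspose_mul_mul_same P
  rwa [hP.eq] at this

/-- Conjugation by an invertible hermitian matrix preserves PD. -/
lemma pd_conj {A P : Matrix (Fin n) (Fin n) ℝ} (hA : A.PosDef) (hP : P.IsHermitian)
    (hdet : IsUnit P.det) : (P * A * P).PosDef := by
  refine Matrix.PosDef.of_dotProduct_mulVec_pos ?_ (fun x hx => ?_)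
  · rw [Matrix.IsHermitian]
    simp only [Matrix.conjTranspose_mul, hP.eq, hA.isHermitian.eq]
    rw [mul_assoc]
  · have hx' : P *ᵥ x ≠ 0 := by
      intro hc
      exact hx (by simpa [hc] using (Matrix.mulVec_injective_iff_isUnit.mpr
        ((Matrix.isUnit_iff_isUnit_det P).mpr hdet)).eq_iff.mp (by simp [hc]))
    have := hA.dotProduct_mulVec_pos hx'
    simpa [qf_conj A hP x] using this

/-- If `C` is PD and `C - 1` is PSD then `1 - C⁻¹` is PSD. -/
lemma one_sub_inv_psd {C : Matrix (Fin n) (Fin n) ℝ} (hC : C.PosDef)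
    (h1 : (C - 1).PosSemidef) : (1 - C⁻¹).PosSemidef := by
  obtain ⟨S, hS, hSS⟩ := exists_herm_sqrt hC.posSemidef
  have hdet : IsUnit C.det := hC.det_pos.ne'.isUnit
  have hK := psd_conj h1 hS.isHermitian
  have hkey : S * (C - 1) * S = C * C - C := by
    rw [mul_sub, sub_mul, mul_one, ← hSS]
    noncomm_ring
  rw [hkey] at hK
  have hres : 1 - C⁻¹ = C⁻¹ * (C * C - C) * C⁻¹ := by
    rw [mul_sub, sub_mul, ← Matrix.mul_assoc, Matrix.nonsing_inv_mul _ hdet, one_mul, one_mul,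
      Matrix.mul_nonsing_inv _ hdet]
  rw [hres]
  exact psd_conj hK hC.inv.isHermitian

/-- Antitonicity of matrix inverse on PD matrices. -/
lemma inv_antitone {A B : Matrix (Fin n) (Fin n) ℝ} (hA : A.PosDef) (hB : B.PosDef)
    (hAB : (B - A).PosSemidef) : (A⁻¹ - B⁻¹).PosSemidef := by
  obtain ⟨S, hS, hSS⟩ := exists_herm_sqrt hA.posSemidef
  have hdetA : IsUnit A.det := hA.det_pos.ne'.isUnit
  have hdetS : IsUnit S.det := by
    have h2 : S.det * S.det = A.det := by rw [← Matrix.det_mul, hSS]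
    exact isUnit_of_mul_isUnit_left (h2 ▸ hdetA)
  have hSiH : (S⁻¹).IsHermitian := by
    rw [Matrix.IsHermitian, Matrix.conjTranspose_nonsing_inv, hS.isHermitian.eq]
  have hdetSi : IsUnit (S⁻¹).det := by
    rwa [Matrix.det_nonsing_inv, isUnit_ringInverse]
  have hSinv : S⁻¹ * S = 1 := Matrix.nonsing_inv_mul S hdetS
  have hSinv' : S * S⁻¹ = 1 := Matrix.mul_nonsing_inv S hdetS
  have hSii : S⁻¹⁻¹ = S := Matrix.nonsing_inv_nonsing_inv S hdetS
  have hC : (S⁻¹ * B * S⁻¹).PosDef := pd_conj hB hSiH hdetSi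
  have hC1 : (S⁻¹ * B * S⁻¹ - 1).PosSemidef := by
    have := psd_conj hAB hSiH
    have he : S⁻¹ * (B - A) * S⁻¹ = S⁻¹ * B * S⁻¹ - 1 := by
      rw [mul_sub, sub_mul]
      congr 1
      rw [← hSS, ← Matrix.mul_assoc S⁻¹ S S, hSinv, one_mul, hSinv']
    rwa [he] at this
  have hmain := one_sub_inv_psd hC hC1
  have hCinv : (S⁻¹ * B * S⁻¹)⁻¹ = S * B⁻¹ * S := by
    rw [Matrix.mul_inv_rev, Matrix.mul_inv_rev, hSii, Matrix.mul_assoc]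
  rw [hCinv] at hmain
  have hres : A⁻¹ - B⁻¹ = S⁻¹ * (1 - S * B⁻¹ * S) * S⁻¹ := by
    rw [mul_sub, sub_mul, mul_one]
    congr 1
    · rw [← hSS, Matrix.mul_inv_rev]
    · rw [← Matrix.mul_assoc, ← Matrix.mul_assoc, hSinv, one_mul, Matrix.mul_assoc, hSinv',
        Matrix.mul_one]
  rw [hres]
  exact psd_conj hmain hSiH

/-- The key identity `T - T (J + T)⁻¹ T = (T⁻¹ + J⁻¹)⁻¹`. -/
lemma parallel_eq {T J : Matrix (Fin n) (Fin n) ℝ} (hT : T.PosDef) (hJ : J.PosDef) :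
    T - T * (J + T)⁻¹ * T = (T⁻¹ + J⁻¹)⁻¹ := by
  have hJT : (J + T).PosDef := hJ.add hT
  have hdJT : IsUnit (J + T).det := hJT.det_pos.ne'.isUnit
  have hdT : IsUnit T.det := hT.det_pos.ne'.isUnit
  have hdJ : IsUnit J.det := hJ.det_pos.ne'.isUnit
  symm
  apply Matrix.inv_eq_left_inv
  have h1 : (1 : Matrix (Fin n) (Fin n) ℝ) + T * J⁻¹ = (J + T) * J⁻¹ := by
    rw [add_mul, Matrix.mul_nonsing_inv _ hdJ]
  have key : T * (J + T)⁻¹ * (T * J⁻¹) + T * (J + T)⁻¹ = T * J⁻¹ := by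
    have h2 : T * (J + T)⁻¹ * (T * J⁻¹) + T * (J + T)⁻¹
        = T * (J + T)⁻¹ * ((J + T) * J⁻¹) := by
      rw [← h1]; noncomm_ring
    rw [h2, Matrix.mul_assoc T (J + T)⁻¹ _, ← Matrix.mul_assoc (J + T)⁻¹ (J + T) J⁻¹,
      Matrix.nonsing_inv_mul _ hdJT, one_mul]
  calc (T - T * (J + T)⁻¹ * T) * (T⁻¹ + J⁻¹)
      = T * T⁻¹ + T * J⁻¹ - (T * (J + T)⁻¹ * (T * T⁻¹) + T * (J + T)⁻¹ * (T * J⁻¹)) := by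
        noncomm_ring
    _ = 1 + T * J⁻¹ - (T * (J + T)⁻¹ * (T * J⁻¹) + T * (J + T)⁻¹) := by
        rw [Matrix.mul_nonsing_inv _ hdT]; noncomm_ring
    _ = 1 + T * J⁻¹ - T * J⁻¹ := by rw [key]
    _ = 1 := by noncomm_ring

/-- `g J := (T⁻¹ + J⁻¹)⁻¹` is positive definite. -/
lemma gmat_pd {T J : Matrix (Fin n) (Fin n) ℝ} (hT : T.PosDef) (hJ : J.PosDef) :
    ((T⁻¹ + J⁻¹)⁻¹).PosDef := (hT.inv.add hJ.inv).inv

/-- `g` is monotone. -/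
lemma gmat_mono {T A B : Matrix (Fin n) (Fin n) ℝ} (hT : T.PosDef) (hA : A.PosDef)
    (hB : B.PosDef) (hAB : (B - A).PosSemidef) :
    ((T⁻¹ + B⁻¹)⁻¹ - (T⁻¹ + A⁻¹)⁻¹).PosSemidef := by
  have h1 : (A⁻¹ - B⁻¹).PosSemidef := inv_antitone hA hB hAB
  have h2 : ((T⁻¹ + A⁻¹) - (T⁻¹ + B⁻¹)).PosSemidef := by
    have : (T⁻¹ + A⁻¹) - (T⁻¹ + B⁻¹) = A⁻¹ - B⁻¹ := by abel
    rw [this]; exact h1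
  exact inv_antitone (hT.inv.add hB.inv) (hT.inv.add hA.inv) h2

lemma qf_cross (A : Matrix (Fin n) (Fin n) ℝ) (i j : Fin n) :
    (Pi.single i 1 : Fin n → ℝ) ⬝ᵥ (A *ᵥ Pi.single j 1) = A i j := by
  simp [Matrix.mulVec_single, dotProduct, Pi.single_apply]

lemma qf_expand (A : Matrix (Fin n) (Fin n) ℝ) (x y : Fin n → ℝ) :
    (x + y) ⬝ᵥ (A *ᵥ (x + y)) =
      x ⬝ᵥ (A *ᵥ x) + y ⬝ᵥ (A *ᵥ y) + x ⬝ᵥ (A *ᵥ y) + y ⬝ᵥ (A *ᵥ x) := by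
  rw [Matrix.mulVec_add, add_dotProduct, dotProduct_add, dotProduct_add]
  ring

/-- Polarization: entries of a real symmetric matrix from its quadratic form. -/
lemma qf_polarization {A : Matrix (Fin n) (Fin n) ℝ} (hA : A.IsHermitian) (i j : Fin n) :
    A i j = ((Pi.single i 1 + Pi.single j 1 : Fin n → ℝ) ⬝ᵥ (A *ᵥ (Pi.single i 1 + Pi.single j 1))
      - (Pi.single i 1 : Fin n → ℝ) ⬝ᵥ (A *ᵥ Pi.single i 1)
      - (Pi.single j 1 : Fin n → ℝ) ⬝ᵥ (A *ᵥ Pi.single j 1)) / 2 := by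
  have hsym : A j i = A i j := by
    have := congrFun (congrFun hA.eq j) i
    simpa [Matrix.conjTranspose_apply] using this.symm
  rw [qf_expand, qf_cross, qf_cross, qf_cross, qf_cross, hsym]
  ring

/-- Loewner antisymmetry. -/
lemma psd_antisymm {A B : Matrix (Fin n) (Fin n) ℝ} (h1 : (B - A).PosSemidef)
    (h2 : (A - B).PosSemidef) : A = B := by
  have hq : ∀ x : Fin n → ℝ, x ⬝ᵥ ((B - A) *ᵥ x) = 0 := by
    intro x
    have e1 : 0 ≤ x ⬝ᵥ ((B - A) *ᵥ x) := by simpa using h1.dotProduct_mulVec_nonneg x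
    have e2 : 0 ≤ x ⬝ᵥ ((A - B) *ᵥ x) := by simpa using h2.dotProduct_mulVec_nonneg x
    have : x ⬝ᵥ ((A - B) *ᵥ x) = - (x ⬝ᵥ ((B - A) *ᵥ x)) := by
      rw [show A - B = -(B - A) by abel, Matrix.neg_mulVec, dotProduct_neg]
    linarith [this ▸ e2]
  have hz : ∀ i j, (B - A) i j = 0 := by
    intro i j
    rw [qf_polarization h1.isHermitian i j, hq, hq, hq]
    ring
  have : B - A = 0 := by ext i j; exact hz i j
  exact (sub_eq_zero.mp this).symm

lemma qf_sub (A B : Matrix (Fin n) (Fin n) ℝ) (x : Fin n → ℝ) :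
    x ⬝ᵥ ((A - B) *ᵥ x) = x ⬝ᵥ (A *ᵥ x) - x ⬝ᵥ (B *ᵥ x) := by
  rw [Matrix.sub_mulVec, dotProduct_sub]

/-- Monotone convergence for Loewner-bounded sequences of symmetric matrices. -/
lemma matrix_monotone_convergence {A : ℕ → Matrix (Fin n) (Fin n) ℝ}
    {B : Matrix (Fin n) (Fin n) ℝ}
    (hherm : ∀ t, (A t).IsHermitian)
    (hmono : ∀ t, (A (t + 1) - A t).PosSemidef)
    (hbdd : ∀ t, (B - A t).PosSemidef) :
    ∃ X : Matrix (Fin n) (Fin n) ℝ, X.IsHermitian ∧ (∀ t, (X - A t).PosSemidef) ∧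
      Filter.Tendsto A Filter.atTop (nhds X) ∧
      ∀ C : Matrix (Fin n) (Fin n) ℝ, C.IsHermitian → (∀ t, (C - A t).PosSemidef) →
        (C - X).PosSemidef := by
  set q : ℕ → (Fin n → ℝ) → ℝ := fun t x => x ⬝ᵥ (A t *ᵥ x) with hq
  have hmono' : ∀ x, Monotone fun t => q t x := by
    intro x
    apply monotone_nat_of_le_succ
    intro t
    have := (hmono t).dotProduct_mulVec_nonneg x
    simp only [star_trivial, qf_sub] at this
    simpa [hq] using by linarith
  have hbdd' : ∀ x, BddAbove (Set.range fun t => q t x) := by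
    intro x
    refine ⟨x ⬝ᵥ (B *ᵥ x), ?_⟩
    rintro - ⟨t, rfl⟩
    have := (hbdd t).dotProduct_mulVec_nonneg x
    simp only [star_trivial, qf_sub] at this
    simpa [hq] using by linarith
  set L : (Fin n → ℝ) → ℝ := fun x => ⨆ t, q t x with hL
  have hconv : ∀ x, Filter.Tendsto (fun t => q t x) Filter.atTop (nhds (L x)) :=
    fun x => tendsto_atTop_ciSup (hmono' x) (hbdd' x)
  have hle_L : ∀ t x, q t x ≤ L x := fun t x => le_ciSup (hbdd' x) t
  set X : Matrix (Fin n) (Fin n) ℝ := Matrix.of fun i j =>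
    (L (Pi.single i 1 + Pi.single j 1) - L (Pi.single i 1) - L (Pi.single j 1)) / 2 with hX
  have htendX : Filter.Tendsto A Filter.atTop (nhds X) := by
    apply tendsto_pi_nhds.mpr
    intro i
    rw [tendsto_pi_nhds]
    intro j
    have heq : (fun t => A t i j) = fun t =>
        (q t (Pi.single i 1 + Pi.single j 1) - q t (Pi.single i 1) - q t (Pi.single j 1)) / 2 := by
      funext t
      exact qf_polarization (hherm t) i j
    rw [heq]
    exact (((hconv _).sub (hconv _)).sub (hconv _)).div_const 2
  have hqX : ∀ x, L x = x ⬝ᵥ (X *ᵥ x) := by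
    intro x
    have hcont : Continuous fun A' : Matrix (Fin n) (Fin n) ℝ => x ⬝ᵥ (A' *ᵥ x) :=
      (continuous_const.dotProduct (continuous_id.matrix_mulVec continuous_const))
    exact tendsto_nhds_unique (hconv x) ((hcont.tendsto X).comp htendX)
  have hXherm : X.IsHermitian := by
    rw [Matrix.IsHermitian]
    ext i j
    simp only [Matrix.conjTranspose_apply, star_trivial, hX, Matrix.of_apply]
    rw [add_comm (Pi.single j 1)]
    ring
  refine ⟨X, hXherm, fun t => .of_dotProduct_mulVec_nonneg (hXherm.sub (hherm t)) fun x => ?_,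
    htendX, fun C hC hCt => .of_dotProduct_mulVec_nonneg (hC.sub hXherm) fun x => ?_⟩
  · simp only [star_trivial, qf_sub]
    have := hle_L t x
    rw [hqX x] at this
    linarith
  · simp only [star_trivial, qf_sub]
    have : L x ≤ x ⬝ᵥ (C *ᵥ x) := by
      apply ciSup_le
      intro t
      have := (hCt t).dotProduct_mulVec_nonneg x
      simp only [star_trivial, qf_sub] at this
      linarith
    rw [hqX x] at this
    linarith

lemma psd_smul {A : Matrix (Fin n) (Fin n) ℝ} (hA : A.PosSemidef) {c : ℝ} (hc : 0 ≤ c) :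
    (c • A).PosSemidef := by
  refine Matrix.PosSemidef.of_dotProduct_mulVec_nonneg ?_ (fun x => ?_)
  · rw [Matrix.IsHermitian, Matrix.conjTranspose_smul, star_trivial, hA.isHermitian.eq]
  · have := hA.dotProduct_mulVec_nonneg x
    rw [smul_mulVec, dotProduct_smul, smul_eq_mul]
    exact mul_nonneg hc (by simpa using this)

lemma pd_smul {A : Matrix (Fin n) (Fin n) ℝ} (hA : A.PosDef) {c : ℝ} (hc : 0 < c) :
    (c • A).PosDef := by
  refine Matrix.PosDef.of_dotProduct_mulVec_pos ?_ (fun x hx => ?_)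
  · rw [Matrix.IsHermitian, Matrix.conjTranspose_smul, star_trivial, hA.isHermitian.eq]
  · have := hA.dotProduct_mulVec_pos hx
    rw [smul_mulVec, dotProduct_smul, smul_eq_mul]
    exact mul_pos hc (by simpa using this)

lemma smul_matrix_inv {A : Matrix (Fin n) (Fin n) ℝ} (hA : IsUnit A.det) {c : ℝ} (hc : c ≠ 0) :
    (c • A)⁻¹ = c⁻¹ • A⁻¹ := by
  apply Matrix.inv_eq_left_inv
  rw [Matrix.smul_mul, Matrix.mul_smul, smul_smul, inv_mul_cancel₀ hc,
    Matrix.nonsing_inv_mul _ hA, one_smul]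

lemma qf_smul (A : Matrix (Fin n) (Fin n) ℝ) (c : ℝ) (x : Fin n → ℝ) :
    x ⬝ᵥ ((c • A) *ᵥ x) = c * (x ⬝ᵥ (A *ᵥ x)) := by
  rw [smul_mulVec, dotProduct_smul, smul_eq_mul]

lemma qf_smul_vec (A : Matrix (Fin n) (Fin n) ℝ) (c : ℝ) (x : Fin n → ℝ) :
    (c • x) ⬝ᵥ (A *ᵥ (c • x)) = c ^ 2 * (x ⬝ᵥ (A *ᵥ x)) := by
  rw [Matrix.mulVec_smul, smul_dotProduct, dotProduct_smul, smul_eq_mul, smul_eq_mul]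
  ring

/-- For PD `M`, `Y`, there is `ε > 0` with `M - ε Y` PSD. -/
lemma exists_eps_psd (hn : 0 < n) {M Y : Matrix (Fin n) (Fin n) ℝ}
    (hM : M.PosDef) (hY : Y.PosDef) : ∃ ε : ℝ, 0 < ε ∧ (M - ε • Y).PosSemidef := by
  haveI : Nonempty (Fin n) := ⟨⟨0, hn⟩⟩
  set S : Set (Fin n → ℝ) := Metric.sphere 0 1 with hS
  have hcomp : IsCompact S := isCompact_sphere 0 1
  have hne : S.Nonempty := NormedSpace.sphere_nonempty.mpr zero_le_one
  have hcM : Continuous fun x : Fin n → ℝ => x ⬝ᵥ (M *ᵥ x) :=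
    continuous_id.dotProduct (continuous_const.matrix_mulVec continuous_id)
  have hcY : Continuous fun x : Fin n → ℝ => x ⬝ᵥ (Y *ᵥ x) :=
    continuous_id.dotProduct (continuous_const.matrix_mulVec continuous_id)
  obtain ⟨u, huS, hu⟩ := hcomp.exists_isMinOn hne hcM.continuousOn
  obtain ⟨v, hvS, hv⟩ := hcomp.exists_isMaxOn hne hcY.continuousOn
  have hu0 : u ≠ 0 := by
    intro h
    rw [hS, mem_sphere_iff_norm, h] at huS
    simp at huS
  have hδ : 0 < u ⬝ᵥ (M *ᵥ u) := by simpa using hM.dotProduct_mulVec_pos hu0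
  have hκ : 0 < v ⬝ᵥ (Y *ᵥ v) := by
    have := hv huS
    have h1 : 0 < u ⬝ᵥ (Y *ᵥ u) := by simpa using hY.dotProduct_mulVec_pos hu0
    exact lt_of_lt_of_le h1 this
  refine ⟨(u ⬝ᵥ (M *ᵥ u)) / (v ⬝ᵥ (Y *ᵥ v)), div_pos hδ hκ, ?_⟩
  set ε := (u ⬝ᵥ (M *ᵥ u)) / (v ⬝ᵥ (Y *ᵥ v)) with hε
  refine Matrix.PosSemidef.of_dotProduct_mulVec_nonneg
    (hM.isHermitian.sub (psd_smul hY.posSemidef (le_of_lt (div_pos hδ hκ))).isHermitian) ?_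
  intro x
  rcases eq_or_ne x 0 with rfl | hx
  · simp
  · have hr : 0 < ‖x‖ := norm_pos_iff.mpr hx
    set w : Fin n → ℝ := ‖x‖⁻¹ • x with hw
    have hwS : w ∈ S := by
      rw [hS, mem_sphere_iff_norm, sub_zero, hw, norm_smul]
      simp [abs_of_nonneg (inv_nonneg.mpr hr.le), inv_mul_cancel₀ hr.ne']
    have hxw : x = ‖x‖ • w := by
      rw [hw, smul_smul, mul_inv_cancel₀ hr.ne', one_smul]
    have hMw : u ⬝ᵥ (M *ᵥ u) ≤ w ⬝ᵥ (M *ᵥ w) := hu hwS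
    have hYw : w ⬝ᵥ (Y *ᵥ w) ≤ v ⬝ᵥ (Y *ᵥ v) := hv hwS
    have hqM : x ⬝ᵥ (M *ᵥ x) = ‖x‖ ^ 2 * (w ⬝ᵥ (M *ᵥ w)) := by
      conv_lhs => rw [hxw]
      rw [qf_smul_vec]
    have hqY : x ⬝ᵥ (Y *ᵥ x) = ‖x‖ ^ 2 * (w ⬝ᵥ (Y *ᵥ w)) := by
      conv_lhs => rw [hxw]
      rw [qf_smul_vec]
    have hεκ : ε * (v ⬝ᵥ (Y *ᵥ v)) = u ⬝ᵥ (M *ᵥ u) := by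
      rw [hε, div_mul_cancel₀ _ hκ.ne']
    have key : ε * (x ⬝ᵥ (Y *ᵥ x)) ≤ x ⬝ᵥ (M *ᵥ x) := by
      rw [hqM, hqY]
      have h2 : ε * (w ⬝ᵥ (Y *ᵥ w)) ≤ u ⬝ᵥ (M *ᵥ u) := by
        calc ε * (w ⬝ᵥ (Y *ᵥ w)) ≤ ε * (v ⬝ᵥ (Y *ᵥ v)) := by
              apply mul_le_mul_of_nonneg_left hYw (div_pos hδ hκ).le
          _ = u ⬝ᵥ (M *ᵥ u) := hεκ
      nlinarith [sq_nonneg ‖x‖]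
    simp only [star_trivial, qf_sub, qf_smul]
    linarith

end helpers

/-- Monotone convergence of the recursive EFIM: with `J₀ = M` and
`J_{t+1} = M + T − T (J_t + T)⁻¹ T` for symmetric positive definite `M`, `T`,
the sequence is nondecreasing in the Loewner order, bounded above by `M + T`, and
converges to the unique positive definite solution of the fixed-point equation. -/
theorem stmt17 {n : ℕ} (M T : Matrix (Fin n) (Fin n) ℝ)
    (hM : M.PosDef) (hT : T.PosDef)
    (J : ℕ → Matrix (Fin n) (Fin n) ℝ) (hJ0 : J 0 = M)
    (hrec : ∀ t, J (t + 1) = M + T - T * (J t + T)⁻¹ * T) :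
    (∀ t, (J (t + 1) - J t).PosSemidef) ∧
    (∀ t, (M + T - J t).PosSemidef) ∧
    ∃ X : Matrix (Fin n) (Fin n) ℝ, X.PosDef ∧
      X = M + T - T * (X + T)⁻¹ * T ∧
      Filter.Tendsto J Filter.atTop (nhds X) ∧
      ∀ Y : Matrix (Fin n) (Fin n) ℝ, Y.PosDef →
        Y = M + T - T * (Y + T)⁻¹ * T → Y = X := by
  -- positive definiteness of all iterates
  have hPD : ∀ t, (J t).PosDef := by
    intro t
    induction t with
    | zero => rw [hJ0]; exact hM
    | succ t ih =>
      rw [hrec t, add_sub_assoc, parallel_eq hT ih]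
      exact hM.add (gmat_pd hT ih)
  have hrec' : ∀ t, J (t + 1) = M + (T⁻¹ + (J t)⁻¹)⁻¹ := fun t => by
    rw [hrec t, add_sub_assoc, parallel_eq hT (hPD t)]
  -- monotonicity
  have hgrow : ∀ t, (J (t + 1) - J t).PosSemidef := by
    intro t
    induction t with
    | zero =>
      rw [hrec' 0, hJ0, add_sub_cancel_left]
      exact (gmat_pd hT hM).posSemidef
    | succ t ih =>
      rw [hrec' t, hrec' (t + 1),
        show M + (T⁻¹ + (J (t+1))⁻¹)⁻¹ - (M + (T⁻¹ + (J t)⁻¹)⁻¹)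
          = (T⁻¹ + (J (t+1))⁻¹)⁻¹ - (T⁻¹ + (J t)⁻¹)⁻¹ by abel]
      exact gmat_mono hT (hPD t) (hPD (t+1)) ih
  -- upper bound
  have hbound : ∀ t, (M + T - J t).PosSemidef := by
    intro t
    cases t with
    | zero => rw [hJ0, add_sub_cancel_left]; exact hT.posSemidef
    | succ t =>
      rw [hrec t, sub_sub_cancel]
      exact psd_conj ((hPD t).add hT).inv.posSemidef hT.isHermitian
  -- convergence
  obtain ⟨X, hXherm, hXub, htend, hXmin⟩ :=
    matrix_monotone_convergence (fun t => (hPD t).isHermitian) hgrow hbound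
  have hXM : (X - M).PosSemidef := by have := hXub 0; rwa [hJ0] at this
  have hXpd : X.PosDef := by
    have : X = M + (X - M) := by abel
    rw [this]; exact hM.add_posSemidef hXM
  -- fixed point equation
  have hfix : X = M + T - T * (X + T)⁻¹ * T := by
    have hdet : (X + T).det ≠ 0 := (hXpd.add hT).det_pos.ne'
    have hcontinv : ContinuousAt Inv.inv (X + T) :=
      continuousAt_matrix_inv _ (NormedRing.inverse_continuousAt (Units.mk0 _ hdet))
    have hinvt : Filter.Tendsto (fun t => (J t + T)⁻¹) Filter.atTop (nhds ((X + T)⁻¹)) :=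
      hcontinv.tendsto.comp (htend.add tendsto_const_nhds)
    have hcont2 : Continuous fun A : Matrix (Fin n) (Fin n) ℝ => M + T - T * A * T :=
      continuous_const.sub ((continuous_const.matrix_mul continuous_id).matrix_mul continuous_const)
    have htend2 : Filter.Tendsto (fun t => M + T - T * (J t + T)⁻¹ * T) Filter.atTop
        (nhds (M + T - T * (X + T)⁻¹ * T)) := (hcont2.tendsto _).comp hinvt
    have htend1 : Filter.Tendsto (fun t => J (t + 1)) Filter.atTop (nhds X) :=
      htend.comp (Filter.tendsto_add_atTop_nat 1)
    have heq : (fun t => J (t + 1)) = fun t => M + T - T * (J t + T)⁻¹ * T := funext hrec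
    rw [heq] at htend1
    exact tendsto_nhds_unique htend1 htend2
  have hXfix' : X = M + (T⁻¹ + X⁻¹)⁻¹ := by
    conv_lhs => rw [hfix]
    rw [add_sub_assoc, parallel_eq hT hXpd]
  refine ⟨hgrow, hbound, X, hXpd, hfix, htend, ?_⟩
  -- uniqueness
  intro Y hY hYfix
  rcases Nat.eq_zero_or_pos n with hn | hn
  · subst hn; exact Subsingleton.elim Y X
  have hYfix' : Y = M + (T⁻¹ + Y⁻¹)⁻¹ := by
    conv_lhs => rw [hYfix]
    rw [add_sub_assoc, parallel_eq hT hY]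
  -- Y dominates the sequence, hence X ≤ Y
  have hYJ : ∀ t, (Y - J t).PosSemidef := by
    intro t
    induction t with
    | zero =>
      rw [hJ0]
      rw [hYfix', add_sub_cancel_left]
      exact (gmat_pd hT hY).posSemidef
    | succ t ih =>
      rw [hrec' t]
      nth_rewrite 1 [hYfix']
      rw [show M + (T⁻¹ + Y⁻¹)⁻¹ - (M + (T⁻¹ + (J t)⁻¹)⁻¹)
          = (T⁻¹ + Y⁻¹)⁻¹ - (T⁻¹ + (J t)⁻¹)⁻¹ by abel]
      exact gmat_mono hT (hPD t) hY ih
  have hYX : (Y - X).PosSemidef := hXmin Y hY.isHermitian hYJ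
  -- now show (X - Y).PosSemidef via the sSup argument
  obtain ⟨ε, hε, hMε⟩ := exists_eps_psd hn hM hY
  set S : Set ℝ := {c : ℝ | (X - c • Y).PosSemidef} with hSdef
  have h0S : (0 : ℝ) ∈ S := by
    have : X - (0 : ℝ) • Y = X := by simp
    simpa [hSdef, this] using hXpd.posSemidef
  set x₀ : Fin n → ℝ := Pi.single ⟨0, hn⟩ 1 with hx₀def
  have hx₀ : x₀ ≠ 0 := by
    intro hc
    have := congrFun hc ⟨0, hn⟩
    simp [hx₀def] at this
  have hYx₀ : 0 < x₀ ⬝ᵥ (Y *ᵥ x₀) := by simpa using hY.dotProduct_mulVec_pos hx₀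
  have hbddS : BddAbove S := by
    refine ⟨(x₀ ⬝ᵥ (X *ᵥ x₀)) / (x₀ ⬝ᵥ (Y *ᵥ x₀)), fun c hc => ?_⟩
    have := hc.dotProduct_mulVec_nonneg x₀
    simp only [star_trivial, qf_sub, qf_smul] at this
    rw [le_div_iff₀ hYx₀]
    linarith
  set c := sSup S with hcdef
  have hc0 : 0 ≤ c := le_csSup hbddS h0S
  have hcS : c ∈ S := by
    refine Matrix.PosSemidef.of_dotProduct_mulVec_nonneg (hXherm.sub ?_) (fun x => ?_)
    · rw [Matrix.IsHermitian, Matrix.conjTranspose_smul, star_trivial, hY.isHermitian.eq]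
    · rcases eq_or_ne x 0 with rfl | hx
      · simp
      · have hYx : 0 < x ⬝ᵥ (Y *ᵥ x) := by simpa using hY.dotProduct_mulVec_pos hx
        have hb : c ≤ (x ⬝ᵥ (X *ᵥ x)) / (x ⬝ᵥ (Y *ᵥ x)) := by
          apply csSup_le ⟨0, h0S⟩
          intro c' hc'
          have := hc'.dotProduct_mulVec_nonneg x
          simp only [star_trivial, qf_sub, qf_smul] at this
          rw [le_div_iff₀ hYx]
          linarith
        have hb' := (le_div_iff₀ hYx).mp hb
        simp only [star_trivial, qf_sub, qf_smul]
        linarith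
  by_cases hc1 : 1 ≤ c
  · -- conclude X - Y PSD, then antisymmetry
    have hsum := hcS.1
    have h1 : ((X - c • Y) + (c - 1) • Y).PosSemidef :=
      hcS.add (psd_smul hY.posSemidef (by linarith))
    have he : (X - c • Y) + (c - 1) • Y = X - Y := by module
    rw [he] at h1
    exact psd_antisymm h1 hYX
  · exfalso
    push_neg at hc1
    -- key step: X ⪰ (1-c) M + c Y
    have hstep : (X - ((1 - c) • M + c • Y)).PosSemidef := by
      rcases eq_or_lt_of_le hc0 with hc0' | hc0'
      · -- c = 0
        have he : X - ((1 - c) • M + c • Y) = X - M := by rw [← hc0']; module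
        rw [he]; exact hXM
      · -- 0 < c < 1
        have hcY : (c • Y).PosDef := pd_smul hY hc0'
        have hcinv : 0 < c⁻¹ := inv_pos.mpr hc0'
        have hcinv1 : 1 ≤ c⁻¹ := (one_le_inv₀ hc0').mpr hc1.le
        have hYdet : IsUnit Y.det := hY.det_pos.ne'.isUnit
        have hTYdet : IsUnit (T⁻¹ + Y⁻¹).det := (hT.inv.add hY.inv).det_pos.ne'.isUnit
        have e1 : (c • Y)⁻¹ = c⁻¹ • Y⁻¹ := smul_matrix_inv hYdet hc0'.ne'
        have e2 : c • (T⁻¹ + Y⁻¹)⁻¹ = (c⁻¹ • (T⁻¹ + Y⁻¹))⁻¹ := by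
          rw [smul_matrix_inv hTYdet (inv_ne_zero hc0'.ne'), inv_inv]
        -- monotone step: g(X) ⪰ g(cY)
        have h1 : ((T⁻¹ + X⁻¹)⁻¹ - (T⁻¹ + (c • Y)⁻¹)⁻¹).PosSemidef :=
          gmat_mono hT hcY hXpd hcS
        -- concavity step: g(cY) ⪰ c g(Y)
        have hBA : ((c⁻¹ • (T⁻¹ + Y⁻¹)) - (T⁻¹ + c⁻¹ • Y⁻¹)).PosSemidef := by
          have he : c⁻¹ • (T⁻¹ + Y⁻¹) - (T⁻¹ + c⁻¹ • Y⁻¹) = (c⁻¹ - 1) • T⁻¹ := by module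
          rw [he]
          exact psd_smul hT.inv.posSemidef (by linarith)
        have hA_pd : (T⁻¹ + c⁻¹ • Y⁻¹).PosDef := hT.inv.add (pd_smul hY.inv hcinv)
        have hB_pd : (c⁻¹ • (T⁻¹ + Y⁻¹)).PosDef := pd_smul (hT.inv.add hY.inv) hcinv
        have h2 : ((T⁻¹ + (c • Y)⁻¹)⁻¹ - c • (T⁻¹ + Y⁻¹)⁻¹).PosSemidef := by
          rw [e1, e2]
          exact inv_antitone hA_pd hB_pd hBA
        have h3 := h1.add h2
        rw [show ((T⁻¹ + X⁻¹)⁻¹ - (T⁻¹ + (c • Y)⁻¹)⁻¹) + ((T⁻¹ + (c • Y)⁻¹)⁻¹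
            - c • (T⁻¹ + Y⁻¹)⁻¹) = (T⁻¹ + X⁻¹)⁻¹ - c • (T⁻¹ + Y⁻¹)⁻¹ by abel] at h3
        have he : X - ((1 - c) • M + c • Y) = (T⁻¹ + X⁻¹)⁻¹ - c • (T⁻¹ + Y⁻¹)⁻¹ := by
          conv_lhs => rw [hXfix', hYfix']
          module
        rw [he]
        exact h3
    -- hence c + (1-c)ε ∈ S, contradicting c = sSup S
    have hmem : c + (1 - c) * ε ∈ S := by
      have h4 := hstep.add (psd_smul hMε (by linarith : (0:ℝ) ≤ 1 - c))
      have he : (X - ((1 - c) • M + c • Y)) + (1 - c) • (M - ε • Y)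
          = X - (c + (1 - c) * ε) • Y := by module
      rw [he] at h4
      exact h4
    have : c + (1 - c) * ε ≤ c := le_csSup hbddS hmem
    nlinarith
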